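/- Let Λ be an artin algebra and f : X → Y an irreducible morphism in C_n(proj Λ). If f is not an epimorphism and the image Im f^i is projective for every 1 ≤ i ≤ n, then f is a monomorphism. -/

import Mathlib

universe u

/-- `M` is a finitely generated projective `Λ`-module. -/
def IsFGProj (Λ : Type u) [Ring Λ] (M : Type u) [AddCommGroup M] [Module Λ M] : Prop :=
  Module.Finite Λ M ∧ Module.Projective Λ M

/-- `f` is a split monomorphism of `Λ`-modules. -/
def IsSplitMono (Λ : Type u) [Ring Λ] {M N : Type u} [AddCommGroup M] [Module Λ M]
    [AddCommGroup N] [Module Λ N] (f : M →ₗ[Λ] N) : Prop :=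
  ∃ r : N →ₗ[Λ] M, r.comp f = LinearMap.id

/-- `f` is a split epimorphism of `Λ`-modules. -/
def IsSplitEpi (Λ : Type u) [Ring Λ] {M N : Type u} [AddCommGroup M] [Module Λ M]
    [AddCommGroup N] [Module Λ N] (f : M →ₗ[Λ] N) : Prop :=
  ∃ s : N →ₗ[Λ] M, f.comp s = LinearMap.id

/-- `f` is an irreducible morphism in the category `proj Λ` of finitely generated
projective `Λ`-modules: it is neither a split mono nor a split epi, and in every
factorization `f = g ∘ h` through an object of `proj Λ`, either `h` is a split mono
or `g` is a split epi. -/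
def IrredProj (Λ : Type u) [Ring Λ] {M N : Type u} [AddCommGroup M] [Module Λ M]
    [AddCommGroup N] [Module Λ N] (f : M →ₗ[Λ] N) : Prop :=
  ¬ IsSplitMono Λ f ∧ ¬ IsSplitEpi Λ f ∧
  ∀ (Z : Type u) [AddCommGroup Z] [Module Λ Z], IsFGProj Λ Z →
    ∀ (h : M →ₗ[Λ] Z) (g : Z →ₗ[Λ] N), f = g.comp h → IsSplitMono Λ h ∨ IsSplitEpi Λ g

/-- `Λ` is (left) hereditary: every submodule of a projective module is projective. -/
def IsHereditaryRing (Λ : Type u) [Ring Λ] : Prop :=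
  ∀ (M : Type u) [AddCommGroup M] [Module Λ M], Module.Projective Λ M →
    ∀ N : Submodule Λ M, Module.Projective Λ N

/-! ### The category `C_n(proj Λ)` of complexes of projectives concentrated in degrees `1,…,n` -/

/-- A complex `X^1 → X^2 → ⋯ → X^n` of `Λ`-modules concentrated in degrees `1,…,n`. -/
structure Cplx (Λ : Type u) [Ring Λ] (n : ℕ) : Type (u + 1) where
  X : ℕ → Type u
  [acg : ∀ i, AddCommGroup (X i)]
  [mod : ∀ i, Module Λ (X i)]
  d : ∀ i, X i →ₗ[Λ] X (i + 1)
  dd : ∀ i, (d (i + 1)).comp (d i) = 0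
  zero_out : ∀ i, i = 0 ∨ n < i → Subsingleton (X i)

attribute [instance] Cplx.acg Cplx.mod

variable {Λ : Type u} [Ring Λ] {n : ℕ}

/-- A morphism of complexes. -/
@[ext]
structure CplxHom (A B : Cplx Λ n) where
  f : ∀ i, A.X i →ₗ[Λ] B.X i
  comm : ∀ i, (f (i + 1)).comp (A.d i) = (B.d i).comp (f i)

namespace CplxHom

variable {A B C : Cplx Λ n}

/-- Composition of morphisms of complexes. -/
def comp (g : CplxHom B C) (h : CplxHom A B) : CplxHom A C where
  f i := (g.f i).comp (h.f i)
  comm i := by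
    ext x
    have h1 := LinearMap.congr_fun (h.comm i) x
    have h2 := LinearMap.congr_fun (g.comm i) (h.f i x)
    simp only [LinearMap.comp_apply] at *
    rw [h1, h2]

/-- The identity morphism of a complex. -/
def id (A : Cplx Λ n) : CplxHom A A where
  f _ := LinearMap.id
  comm i := by simp

instance : Zero (CplxHom A B) :=
  ⟨{ f := fun _ => 0
     comm := fun i => by simp }⟩

instance : Add (CplxHom A B) :=
  ⟨fun φ ψ =>
    { f := fun i => φ.f i + ψ.f i
      comm := fun i => by
        simp [LinearMap.add_comp, LinearMap.comp_add, φ.comm i, ψ.comm i] }⟩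

instance : Neg (CplxHom A B) :=
  ⟨fun φ =>
    { f := fun i => -φ.f i
      comm := fun i => by
        simp [LinearMap.neg_comp, LinearMap.comp_neg, φ.comm i] }⟩

instance : Sub (CplxHom A B) :=
  ⟨fun φ ψ =>
    { f := fun i => φ.f i - ψ.f i
      comm := fun i => by
        simp [LinearMap.sub_comp, LinearMap.comp_sub, φ.comm i, ψ.comm i] }⟩

end CplxHom

/-- A complex belongs to `C_n(proj Λ)`: all terms are finitely generated projective. -/
def IsProjCplx (A : Cplx Λ n) : Prop :=
  ∀ i, Module.Finite Λ (A.X i) ∧ Module.Projective Λ (A.X i)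

/-- A split monomorphism in `C_n(proj Λ)`. -/
def CSplitMono {A B : Cplx Λ n} (φ : CplxHom A B) : Prop :=
  ∃ ψ : CplxHom B A, ψ.comp φ = CplxHom.id A

/-- A split epimorphism in `C_n(proj Λ)`. -/
def CSplitEpi {A B : Cplx Λ n} (φ : CplxHom A B) : Prop :=
  ∃ ψ : CplxHom B A, φ.comp ψ = CplxHom.id B

/-- An isomorphism of complexes. -/
def CIsIso {A B : Cplx Λ n} (φ : CplxHom A B) : Prop :=
  ∃ ψ : CplxHom B A, ψ.comp φ = CplxHom.id A ∧ φ.comp ψ = CplxHom.id B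

/-- An irreducible morphism in `C_n(proj Λ)`: neither a split mono nor a split epi, and
in any factorization through an object of `C_n(proj Λ)` one of the factors splits. -/
def CIrred {A B : Cplx Λ n} (φ : CplxHom A B) : Prop :=
  ¬ CSplitMono φ ∧ ¬ CSplitEpi φ ∧
  ∀ (Z : Cplx Λ n), IsProjCplx Z →
    ∀ (h : CplxHom A Z) (g : CplxHom Z B), φ = g.comp h → CSplitMono h ∨ CSplitEpi g

/-- An indecomposable complex: nonzero, and its only idempotent endomorphisms are `0` and
the identity. -/
def CIndec (A : Cplx Λ n) : Prop :=
  (∃ i, Nontrivial (A.X i)) ∧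
  ∀ e : CplxHom A A, e.comp e = e → e = 0 ∨ e = CplxHom.id A


/-- An irreducible morphism in `C_n(proj Λ)` which is not an
epimorphism and whose componentwise images are projective is a monomorphism. -/
theorem irreducible_mono_of_not_epi_of_images_projective
    (R Λ : Type u) [CommRing R] [IsArtinianRing R] [Ring Λ] [Algebra R Λ]
    [Module.Finite R Λ] (n : ℕ) (hn : 2 ≤ n)
    (A B : Cplx Λ n) (hA : IsProjCplx A) (hB : IsProjCplx B)
    (f : CplxHom A B) (hf : CIrred f)
    (hnepi : ¬ ∀ i, Function.Surjective (f.f i))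
    (him : ∀ i, Module.Projective Λ (LinearMap.range (f.f i))) :
    ∀ i, Function.Injective (f.f i) := by
  -- the componentwise image complex
  have hmapsto : ∀ i, ∀ x ∈ LinearMap.range (f.f i),
      B.d i x ∈ LinearMap.range (f.f (i + 1)) := by
    intro i x hx
    obtain ⟨a, rfl⟩ := hx
    exact ⟨A.d i a, LinearMap.congr_fun (f.comm i) a⟩
  set Z : Cplx Λ n :=
    { X := fun i => LinearMap.range (f.f i)
      d := fun i => (B.d i).restrict (hmapsto i)
      dd := fun i => by
        ext x
        have := LinearMap.congr_fun (B.dd i) (x : B.X i)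
        simpa [LinearMap.restrict_apply] using this
      zero_out := fun i hi => by
        haveI := B.zero_out i hi
        exact ⟨fun a b => Subtype.ext (Subsingleton.elim _ _)⟩ } with hZ
  have hZproj : IsProjCplx Z := by
    intro i
    haveI := (hA i).1
    refine ⟨?_, him i⟩
    exact Module.Finite.range (f.f i)
  -- factor f = g ∘ h through Z
  set h : CplxHom A Z :=
    { f := fun i => (f.f i).rangeRestrict
      comm := fun i => by
        ext a
        simpa [Z, LinearMap.restrict_apply] using LinearMap.congr_fun (f.comm i) a } with hh
  set g : CplxHom Z B :=
    { f := fun i => (LinearMap.range (f.f i)).subtype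
      comm := fun i => by
        ext x
        simp [Z, LinearMap.restrict_apply] } with hg
  have hfac : f = g.comp h := by
    ext i a
    rfl
  rcases hf.2.2 Z hZproj h g hfac with hmono | hepi
  · -- h split mono ⇒ each h.f i injective ⇒ f.f i injective
    obtain ⟨ψ, hψ⟩ := hmono
    intro i
    have hinj : Function.Injective (h.f i) := by
      intro a b hab
      have := congr_arg (fun φ : CplxHom A A => φ.f i) hψ
      have h1 : ψ.f i (h.f i a) = a := LinearMap.congr_fun this a
      have h2 : ψ.f i (h.f i b) = b := LinearMap.congr_fun this b
      rw [← h1, ← h2, hab]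
    intro a b hab
    apply hinj
    exact Subtype.ext hab
  · -- g split epi ⇒ each f.f i surjective, contradiction
    exfalso
    apply hnepi
    intro i b
    obtain ⟨ψ, hψ⟩ := hepi
    have := congr_arg (fun φ : CplxHom B B => φ.f i) hψ
    have h1 : g.f i (ψ.f i b) = b := LinearMap.congr_fun this b
    obtain ⟨a, ha⟩ := (ψ.f i b).2
    exact ⟨a, by rw [ha]; exact h1⟩
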